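/- For d ≥ 3 and 0 < T ≤ (d−2)/(d−1), the quantity (A) := H(1 − T/(d−2)) − H(1 − (d−1)T/(d−2)) − T·log₂(d−2) − H(T) is greater than or equal to (B) := −(T·log₂(d−1) + H(T) + H(1−T)). -/

import Mathlib

/-- Scalar entropy contribution `H(x) = -x log₂ x` (with `0 log₂ 0 = 0`). -/
noncomputable def Hbit (x : ℝ) : ℝ := -(x * Real.logb 2 x)

lemma key_negMulLog (u v : ℝ) (hu0 : 0 ≤ u) (hu1 : u ≤ 1) (hv0 : 0 ≤ v) (hv1 : v ≤ 1)
    (hs : 1 ≤ u + v) :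
    Real.negMulLog (u + v - 1) ≤ Real.negMulLog u + Real.negMulLog v := by
  rcases eq_or_lt_of_le (by linarith : u + v ≤ 2) with h2 | h2
  · have hu : u = 1 := by linarith
    have hv : v = 1 := by linarith
    simp [hu, hv]
  · set s : ℝ := 2 - u - v with hs_def
    have hspos : 0 < s := by linarith
    set l : ℝ := (1 - u) / s with hl_def
    set m : ℝ := (1 - v) / s with hm_def
    have hl0 : 0 ≤ l := div_nonneg (by linarith) hspos.le
    have hm0 : 0 ≤ m := div_nonneg (by linarith) hspos.le
    have hlm : l + m = 1 := by
      rw [hl_def, hm_def, ← add_div, div_eq_one_iff_eq hspos.ne']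
      rw [hs_def]; ring
    have hw : (0:ℝ) ≤ u + v - 1 := by linarith
    have hconc := Real.concaveOn_negMulLog
    have h1 : Real.negMulLog u ≥ l * Real.negMulLog (u + v - 1) + (1 - l) * Real.negMulLog 1 := by
      have := hconc.2 (Set.mem_Ici.mpr hw) (Set.mem_Ici.mpr (zero_le_one)) hl0
        (by linarith : (0:ℝ) ≤ 1 - l) (by ring)
      have heq : l • (u + v - 1) + (1 - l) • (1:ℝ) = u := by
        simp only [smul_eq_mul, hl_def]
        field_simp
        ring
      rw [heq] at this
      simpa [smul_eq_mul] using this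
    have h2' : Real.negMulLog v ≥ m * Real.negMulLog (u + v - 1) + (1 - m) * Real.negMulLog 1 := by
      have := hconc.2 (Set.mem_Ici.mpr hw) (Set.mem_Ici.mpr (zero_le_one)) hm0
        (by linarith : (0:ℝ) ≤ 1 - m) (by ring)
      have heq : m • (u + v - 1) + (1 - m) • (1:ℝ) = v := by
        simp only [smul_eq_mul, hm_def]
        field_simp
        ring
      rw [heq] at this
      simpa [smul_eq_mul] using this
    have hone : Real.negMulLog 1 = 0 := Real.negMulLog_one
    rw [hone] at h1 h2'
    have heqW : l * Real.negMulLog (u + v - 1) + m * Real.negMulLog (u + v - 1)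
        = Real.negMulLog (u + v - 1) := by rw [← add_mul, hlm, one_mul]
    linarith [h1, h2', heqW]

lemma Hbit_eq (x : ℝ) : Hbit x = Real.negMulLog x / Real.log 2 := by
  unfold Hbit Real.negMulLog Real.logb
  ring

lemma key_Hbit (u v : ℝ) (hu0 : 0 ≤ u) (hu1 : u ≤ 1) (hv0 : 0 ≤ v) (hv1 : v ≤ 1)
    (hs : 1 ≤ u + v) :
    Hbit (u + v - 1) ≤ Hbit u + Hbit v := by
  have h := key_negMulLog u v hu0 hu1 hv0 hv1 hs
  have hlog : (0:ℝ) < Real.log 2 := Real.log_pos one_lt_two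
  rw [Hbit_eq, Hbit_eq, Hbit_eq, ← add_div, div_le_div_iff_of_pos_right hlog]
  exact h

/-- The case (i) minimum dominates the case (ii) minimum. -/
theorem case_i_ge_case_ii (d : ℕ) (hd : 3 ≤ d) (T : ℝ) (hT0 : 0 < T)
    (hT1 : T ≤ ((d : ℝ) - 2) / ((d : ℝ) - 1)) :
    -(T * Real.logb 2 ((d : ℝ) - 1) + Hbit T + Hbit (1 - T)) ≤
      Hbit (1 - T / ((d : ℝ) - 2)) - Hbit (1 - ((d : ℝ) - 1) * T / ((d : ℝ) - 2))
        - T * Real.logb 2 ((d : ℝ) - 2) - Hbit T := by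
  have hd3 : (3:ℝ) ≤ (d:ℝ) := by exact_mod_cast hd
  set c : ℝ := (d:ℝ) - 2 with hc_def
  have hc1 : (1:ℝ) ≤ c := by rw [hc_def]; linarith
  have hc0 : (0:ℝ) < c := by linarith
  set a : ℝ := T / c with ha_def
  have ha0 : 0 < a := div_pos hT0 hc0
  -- T ≤ c/(c+1), so T + a = T(c+1)/c ≤ 1
  have hTc : T * ((d:ℝ) - 1) ≤ c := by
    rw [le_div_iff₀ (by linarith : (0:ℝ) < (d:ℝ) - 1)] at hT1
    exact hT1
  have hTc' : T * (c + 1) ≤ c := by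
    have : c + 1 = (d:ℝ) - 1 := by rw [hc_def]; ring
    rw [this]; exact hTc
  have hTa : T + a ≤ 1 := by
    show T + T / c ≤ 1
    rw [← sub_nonneg]
    have heq : 1 - (T + T / c) = (c - T * (c + 1)) / c := by
      field_simp
    rw [heq]
    exact div_nonneg (by linarith) hc0.le
  have hT1' : T ≤ 1 := by nlinarith
  have ha1 : a ≤ 1 := by nlinarith
  -- rewrite second Hbit argument
  have harg : 1 - ((d : ℝ) - 1) * T / ((d : ℝ) - 2) = (1 - a) + (1 - T) - 1 := by
    rw [ha_def, hc_def]
    have hne : (d:ℝ) - 2 ≠ 0 := by linarith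
    field_simp
    ring
  have hkey := key_Hbit (1 - a) (1 - T) (by linarith) (by linarith) (by linarith) (by linarith)
    (by linarith)
  rw [harg]
  have hlogle : Real.logb 2 c ≤ Real.logb 2 ((d:ℝ) - 1) := by
    exact Real.logb_le_logb_of_le one_lt_two hc0 (by rw [hc_def]; linarith)
  have hlogterm : 0 ≤ T * (Real.logb 2 ((d:ℝ) - 1) - Real.logb 2 c) := by
    apply mul_nonneg hT0.le
    linarith
  rw [mul_sub] at hlogterm
  linarith [hkey, hlogterm]
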